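/- Let λ be an ordinal and X ⊆ λ + 1. If there exists ξ ≤ λ with cofinality ω₁ such that X ∩ ξ is unbounded in ξ, X ∩ ξ is not stationary in ξ, and ξ ∉ X, then X (with the subspace topology of the order topology) contains an uncountable closed discrete subset. -/

import Mathlib

/-- `C` is a club (closed unbounded) subset of the ordinal `ξ`. -/
def IsClubIn (C : Set Ordinal) (ξ : Ordinal) : Prop :=
  C ⊆ Set.Iio ξ ∧ (∀ a < ξ, ∃ c ∈ C, a ≤ c) ∧
    (∀ a < ξ, (C ∩ Set.Iio a).Nonempty → sSup (C ∩ Set.Iio a) = a → a ∈ C)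

/-- `S` is stationary in the ordinal `ξ`. -/
def IsStationaryIn (S : Set Ordinal) (ξ : Ordinal) : Prop :=
  ∀ C : Set Ordinal, IsClubIn C ξ → (S ∩ C).Nonempty

theorem stmt0 (l : Ordinal) (X : Set Ordinal) (hX : X ⊆ Set.Iic l)
    (ξ : Ordinal) (hξl : ξ ≤ l)
    (hcof : ξ.cof = Cardinal.aleph 1)
    (hunb : ∀ a < ξ, ∃ b ∈ X, b < ξ ∧ a < b)
    (hnstat : ¬ IsStationaryIn (X ∩ Set.Iio ξ) ξ)
    (hnot : ξ ∉ X) :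
    ∃ D : Set X, ¬ D.Countable ∧ IsClosed D ∧ DiscreteTopology D := by
  classical
  rw [IsStationaryIn] at hnstat
  push_neg at hnstat
  obtain ⟨C, hC, hdisj⟩ := hnstat
  obtain ⟨hCsub, hCunb, hCcl⟩ := hC
  have hdisj' : ∀ x, x ∈ X → x < ξ → x ∉ C := by
    intro x hx hxξ hxC
    have : x ∈ (X ∩ Set.Iio ξ) ∩ C := ⟨⟨hx, hxξ⟩, hxC⟩
    rw [hdisj] at this
    exact this
  set ℓ : Ordinal → Ordinal := fun x => sSup (C ∩ Set.Iio x) with hℓdef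
  have hbdd : ∀ x : Ordinal, BddAbove (C ∩ Set.Iio x) :=
    fun x => ⟨x, fun y hy => hy.2.le⟩
  have hℓle : ∀ x, ℓ x ≤ x := fun x => csSup_le' (fun y hy => hy.2.le)
  have hℓmono : ∀ x y : Ordinal, x ≤ y → ℓ x ≤ ℓ y := by
    intro x y hxy
    rcases Set.eq_empty_or_nonempty (C ∩ Set.Iio x) with he | hne
    · simp only [hℓdef, he, csSup_empty]
      exact bot_le
    · exact csSup_le_csSup (hbdd y) hne (fun z hz => ⟨hz.1, lt_of_lt_of_le hz.2 hxy⟩)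
  have hcle : ∀ c x : Ordinal, c ∈ C → c < x → c ≤ ℓ x :=
    fun c x hc hcx => le_csSup (hbdd x) ⟨hc, hcx⟩
  -- the limit: ξ is a limit ordinal
  have hlim : Order.IsSuccLimit ξ := by
    rw [← Ordinal.aleph0_le_cof, hcof]
    exact Cardinal.aleph0_le_aleph 1
  -- the set D₀ : minimal X-points in each gap of C
  set D₀ : Set Ordinal :=
    {x | x ∈ X ∧ x < ξ ∧ ∀ y, y ∈ X → y < ξ → ℓ y = ℓ x → x ≤ y} with hD₀def
  -- D₀ is unbounded in ξ
  have hcofD : ∀ a < ξ, ∃ d ∈ D₀, a < d := by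
    intro a ha
    have hsa : Order.succ a < ξ := hlim.succ_lt ha
    obtain ⟨c, hcC, hac⟩ := hCunb (Order.succ a) hsa
    have hcξ : c < ξ := hCsub hcC
    obtain ⟨x, hxX, hxξ, hcx⟩ := hunb c hcξ
    set F : Set Ordinal := {y | y ∈ X ∧ y < ξ ∧ ℓ y = ℓ x} with hFdef
    have hFne : F.Nonempty := ⟨x, hxX, hxξ, rfl⟩
    set d := Ordinal.lt_wf.min F hFne with hddef
    have hdF : d ∈ F := Ordinal.lt_wf.min_mem F hFne
    have hdmin : ∀ y ∈ F, d ≤ y := by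
      intro y hy
      exact not_lt.mp (Ordinal.lt_wf.not_lt_min F hy)
    refine ⟨d, ⟨hdF.1, hdF.2.1, ?_⟩, ?_⟩
    · intro y hy hyξ hℓy
      exact hdmin y ⟨hy, hyξ, hℓy.trans hdF.2.2⟩
    · have h1 : c ≤ ℓ x := hcle c x hcC hcx
      have h2 : ℓ x ≤ d := hdF.2.2 ▸ hℓle d
      exact lt_of_lt_of_le (Order.lt_succ a) (hac.trans (h1.trans h2))
  have hD₀sub : ∀ d ∈ D₀, d ∈ X ∧ d < ξ := fun d hd => ⟨hd.1, hd.2.1⟩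
  -- if D₀ is unbounded below x ∈ X ∩ Iio ξ, contradiction
  have hkey : ∀ x, x ∈ X → x < ξ →
      (∀ a < x, ∃ d ∈ D₀, a < d ∧ d < x) → (D₀ ∩ Set.Iio x).Nonempty → False := by
    intro x hx hxξ hub ⟨d₀, hd₀D, hd₀x⟩
    have hxpos : (0 : Ordinal) < x := lt_of_le_of_lt (zero_le (a := d₀)) hd₀x
    have hCx : ∀ a < x, ∃ c ∈ C, a < c ∧ c < x := by
      intro a ha
      obtain ⟨d, hdD, had, hdx⟩ := hub a ha
      obtain ⟨d', hd'D, hdd', hd'x⟩ := hub d hdx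
      have hℓne : ℓ d ≠ ℓ d' := by
        intro h
        exact absurd rfl (ne_of_lt (lt_of_lt_of_le hdd'
          (hd'D.2.2 d hdD.1 hdD.2.1 h)))
      have hℓlt : ℓ d < ℓ d' := lt_of_le_of_ne (hℓmono d d' hdd'.le) hℓne
      have hCd'ne : (C ∩ Set.Iio d').Nonempty := by
        by_contra h
        rw [Set.not_nonempty_iff_eq_empty] at h
        have : ℓ d' = ⊥ := by simp only [hℓdef, h, csSup_empty]
        rw [this] at hℓlt
        exact absurd hℓlt (not_lt_bot)
      obtain ⟨c, hc, hℓdc⟩ := exists_lt_of_lt_csSup hCd'ne hℓlt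
      have hdc : d ≤ c := by
        by_contra h
        push_neg at h
        exact absurd (hcle c d hc.1 h) (not_le.mpr hℓdc)
      exact ⟨c, hc.1, lt_of_lt_of_le had hdc, lt_trans hc.2 hd'x⟩
    have hne0 : (C ∩ Set.Iio x).Nonempty := by
      obtain ⟨c, hcC, _, hcx⟩ := hCx 0 hxpos
      exact ⟨c, hcC, hcx⟩
    have hsup : ℓ x = x := by
      rcases lt_or_eq_of_le (hℓle x) with h | h
      · obtain ⟨c, hcC, hℓc, hcx⟩ := hCx (ℓ x) h
        exact absurd (hcle c x hcC hcx) (not_le.mpr hℓc)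
      · exact h
    exact hdisj' x hx hxξ (hCcl x hxξ hne0 hsup)
  -- the main isolation claim
  have K : ∀ x : X, ∃ U : Set Ordinal, IsOpen U ∧ (x : Ordinal) ∈ U ∧
      ∀ y, y ∈ U → y ∈ D₀ → y = (x : Ordinal) := by
    intro x
    have hx : (x : Ordinal) ∈ X := x.2
    rcases lt_trichotomy (x : Ordinal) ξ with hxξ | hxξ | hxξ
    · rcases Set.eq_empty_or_nonempty (D₀ ∩ Set.Iio (x : Ordinal)) with he | hne
      · refine ⟨Set.Iio (Order.succ (x : Ordinal)), isOpen_Iio, Set.mem_Iio.mpr (Order.lt_succ _), ?_⟩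
        intro y hy hyD
        rcases lt_or_eq_of_le (Order.lt_succ_iff.mp (Set.mem_Iio.mp hy)) with h | h
        · have : y ∈ (∅ : Set Ordinal) := he ▸ (Set.mem_inter hyD (Set.mem_Iio.mpr h))
          exact this.elim
        · exact h
      · by_cases hub : ∀ a < (x : Ordinal), ∃ d ∈ D₀, a < d ∧ d < (x : Ordinal)
        · exact absurd (hkey x hx hxξ hub hne) (fun h => h)
        · push_neg at hub
          obtain ⟨a, hax, ha⟩ := hub
          refine ⟨Set.Ioo a (Order.succ (x : Ordinal)), isOpen_Ioo,
            Set.mem_Ioo.mpr ⟨hax, Order.lt_succ _⟩, ?_⟩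
          intro y hy hyD
          rcases lt_or_eq_of_le (Order.lt_succ_iff.mp hy.2) with h | h
          · exact absurd h (not_lt.mpr (ha y hyD hy.1))
          · exact h
    · exact absurd (hxξ ▸ hx) hnot
    · refine ⟨Set.Ioo ξ (Order.succ (x : Ordinal)), isOpen_Ioo,
        ⟨hxξ, Order.lt_succ _⟩, ?_⟩
      intro y hy hyD
      exact absurd (hD₀sub y hyD).2 (not_lt.mpr hy.1.le)
  -- the closed discrete set
  refine ⟨Subtype.val ⁻¹' D₀, ?_, ?_, ?_⟩
  · -- uncountable
    intro hcnt
    have hD₀cnt : D₀.Countable := by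
      have himg : D₀ = Subtype.val '' (Subtype.val ⁻¹' D₀ : Set X) := by
        ext d
        constructor
        · intro hd
          exact ⟨⟨d, hd.1⟩, hd, rfl⟩
        · rintro ⟨⟨d', hd'⟩, hmem, rfl⟩
          exact hmem
      rw [himg]
      exact hcnt.image _
    have hD₀ne : D₀.Nonempty := by
      obtain ⟨d, hd, _⟩ := hcofD 0 hlim.pos
      exact ⟨d, hd⟩
    obtain ⟨f, hf⟩ := hD₀cnt.exists_eq_range hD₀ne
    have hflt : ∀ n, f n < ξ := by
      intro n
      have : f n ∈ D₀ := by rw [hf]; exact Set.mem_range_self n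
      exact this.2.1
    have hsuplt : iSup f < ξ := by
      apply Ordinal.iSup_lt_ord_lift _ hflt
      rw [Cardinal.mk_nat, Cardinal.lift_aleph0, hcof]
      exact Cardinal.aleph0_lt_aleph_one
    obtain ⟨d, hdD, hdgt⟩ := hcofD (iSup f) hsuplt
    obtain ⟨n, hn⟩ : ∃ n, f n = d := by
      have : d ∈ Set.range f := hf ▸ hdD
      exact this
    have : d ≤ iSup f := hn ▸ Ordinal.le_iSup f n
    exact absurd this (not_le.mpr hdgt)
  · -- closed
    rw [← isOpen_compl_iff, isOpen_iff_forall_mem_open]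
    intro x hx
    obtain ⟨U, hU, hxU, hUD⟩ := K x
    refine ⟨Subtype.val ⁻¹' U, ?_, hU.preimage continuous_subtype_val, hxU⟩
    intro y hy hyD
    exact hx ((Subtype.ext (hUD _ hy hyD)) ▸ hyD)
  · -- discrete
    rw [discreteTopology_iff_isOpen_singleton]
    intro z
    obtain ⟨U, hU, hzU, hUD⟩ := K z.1
    have hEq : ({z} : Set (Subtype.val ⁻¹' D₀ : Set X)) =
        (fun w : (Subtype.val ⁻¹' D₀ : Set X) => ((w : X) : Ordinal)) ⁻¹' U := by
      ext w
      constructor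
      · rintro rfl
        exact hzU
      · intro hw
        have := hUD _ hw w.2
        exact Subtype.ext (Subtype.ext this)
    rw [hEq]
    exact hU.preimage (continuous_subtype_val.comp continuous_subtype_val)
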